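/- Let g : ℝⁿ × ℝ → (0, ∞] satisfy: (i) g is continuous at every point where g < ∞; (ii) g(x̂,t̂) = liminf_{(x,t)→(x̂,t̂)} g(x,t) for all points; (iii) g is nondecreasing in the time variable t; (iv) the set {g = ∞} is the epigraph in time of a function τ : ℝⁿ → ℝ ∪ {∞} that is continuous at every point where τ < ∞. Then for every compact set E ⊆ ℝⁿ × [0,∞), every α > 1 and every σ > 0 there exists r > 0 such that α·g(x, αt + σ) ≥ g(y, s) whenever (x,t), (y,s) ∈ E and |(x,t) − (y,s)| ≤ r. -/

import Mathlib

open Set Filter Topology ENNReal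

theorem stmt3 {n : ℕ}
    (g : EuclideanSpace ℝ (Fin n) × ℝ → ℝ≥0∞)
    (hgpos : ∀ p, 0 < g p)
    (hgcont : ∀ p, g p < ⊤ → ContinuousAt g p)
    (hgliminf : ∀ p, g p = Filter.liminf g (𝓝[≠] p))
    (hmono : ∀ x : EuclideanSpace ℝ (Fin n), Monotone (fun t => g (x, t)))
    (τ : EuclideanSpace ℝ (Fin n) → EReal)
    (hτbot : ∀ x, τ x ≠ ⊥)
    (hepi : ∀ x t, g (x, t) = ⊤ ↔ τ x ≤ (t : EReal))
    (hτcont : ∀ x, τ x < ⊤ → ContinuousAt τ x)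
    (E : Set (EuclideanSpace ℝ (Fin n) × ℝ)) (hE : IsCompact E)
    (hEt : ∀ p ∈ E, 0 ≤ p.2) (α σ : ℝ) (hα : 1 < α) (hσ : 0 < σ) :
    ∃ r > 0, ∀ p ∈ E, ∀ q ∈ E, dist p q ≤ r →
      g q ≤ ENNReal.ofReal α * g (p.1, α * p.2 + σ) := by
  have hα0 : (0:ℝ) < α := by linarith
  have hαne : ENNReal.ofReal α ≠ 0 := by
    simp [ENNReal.ofReal_eq_zero]; linarith
  -- pointwise claim
  have key : ∀ p ∈ E, ∃ r > 0, ∀ p' ∈ E, dist p' p < r → ∀ q ∈ E, dist q p < r →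
      g q ≤ ENNReal.ofReal α * g (p'.1, α * p'.2 + σ) := by
    intro p hp
    have hpt : 0 ≤ p.2 := hEt p hp
    rcases lt_or_ge (τ p.1) ((α * p.2 + σ : ℝ) : EReal) with hcase | hcase
    · -- case 1: τ(x̂) < α t̂ + σ ; nearby points have g(x', αt'+σ) = ⊤
      have hτtop : τ p.1 < ⊤ := hcase.trans_le le_top
      obtain ⟨z, hz1, hz2⟩ := exists_between hcase
      have hzbot : z ≠ ⊥ := ne_bot_of_gt hz1
      have hztop : z ≠ ⊤ := (hz2.trans_le le_top).ne
      set c := z.toReal with hcdef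
      have hzc : ((c : ℝ) : EReal) = z := EReal.coe_toReal hztop hzbot
      have hc2 : c < α * p.2 + σ := by
        have := hzc ▸ hz2
        exact_mod_cast this
      have h1 : τ ⁻¹' Iio ((c : ℝ) : EReal) ∈ 𝓝 p.1 :=
        (hτcont p.1 hτtop) (Iio_mem_nhds (hzc ▸ hz1))
      rcases Metric.mem_nhds_iff.mp h1 with ⟨r₁, hr₁, hball⟩
      refine ⟨min r₁ ((α * p.2 + σ - c) / α), lt_min hr₁ (div_pos (by linarith) hα0), ?_⟩
      intro p' hp' hd q hq hdq
      have hd1 : dist p'.1 p.1 < r₁ := by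
        calc dist p'.1 p.1 ≤ dist p' p := by rw [Prod.dist_eq]; exact le_max_left _ _
          _ < r₁ := hd.trans_le (min_le_left _ _)
      have hτ' : τ p'.1 < ((c : ℝ) : EReal) := hball hd1
      have hd2 : |p'.2 - p.2| < (α * p.2 + σ - c) / α := by
        calc |p'.2 - p.2| = dist p'.2 p.2 := (Real.dist_eq _ _).symm
          _ ≤ dist p' p := by rw [Prod.dist_eq]; exact le_max_right _ _
          _ < _ := hd.trans_le (min_le_right _ _)
      have hc3 : c ≤ α * p'.2 + σ := by
        have hD : α * ((α * p.2 + σ - c) / α) = α * p.2 + σ - c :=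
          mul_div_cancel₀ _ hα0.ne'
        have h5 := mul_lt_mul_of_pos_left
          (show p.2 - (α * p.2 + σ - c) / α < p'.2 by linarith [(abs_lt.mp hd2).1]) hα0
        rw [mul_sub, hD] at h5
        linarith
      have hgt : g (p'.1, α * p'.2 + σ) = ⊤ := by
        rw [hepi]
        exact le_trans hτ'.le (by exact_mod_cast hc3)
      rw [hgt, ENNReal.mul_top hαne]
      exact le_top
    · -- case 2: α t̂ + σ ≤ τ(x̂)
      set s₀ := p.2 + σ / 2 with hs₀def
      have hs₀lt : s₀ < α * p.2 + σ := by
        simp only [hs₀def]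
        nlinarith [mul_nonneg (sub_nonneg.mpr hα.le) hpt]
      have hs₀τ : ((s₀ : ℝ) : EReal) < τ p.1 :=
        lt_of_lt_of_le (by exact_mod_cast hs₀lt) hcase
      have hMt : g (p.1, s₀) < ⊤ := by
        rcases eq_or_lt_of_le (le_top : g (p.1, s₀) ≤ ⊤) with h | h
        · exact absurd ((hepi _ _).mp h) (not_le.mpr hs₀τ)
        · exact h
      set M := g (p.1, s₀) with hMdef
      have hM0 : 0 < M := hgpos _
      set β := Real.sqrt α with hβdef
      have hβ0 : 0 < β := Real.sqrt_pos.mpr hα0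
      have hβ1 : 1 < β := by
        nlinarith [Real.sq_sqrt hα0.le, Real.sqrt_nonneg α]
      have hβe1 : 1 < ENNReal.ofReal β := by
        rw [show (1:ℝ≥0∞) = ENNReal.ofReal 1 by simp]
        exact (ENNReal.ofReal_lt_ofReal_iff (by linarith)).mpr hβ1
      have hβene : ENNReal.ofReal β ≠ 0 := by positivity
      have hβet : ENNReal.ofReal β ≠ ⊤ := ENNReal.ofReal_ne_top
      set a := M / ENNReal.ofReal β with hadef
      set b := ENNReal.ofReal β * M with hbdef
      have ha : a < M := by
        rw [hadef, ENNReal.div_lt_iff (Or.inl hβene) (Or.inl hβet)]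
        calc M = M * 1 := (mul_one M).symm
          _ < M * ENNReal.ofReal β :=
            ENNReal.mul_lt_mul_right hM0.ne' hMt.ne hβe1
      have hb : M < b := by
        calc M = 1 * M := (one_mul M).symm
          _ < ENNReal.ofReal β * M :=
            ENNReal.mul_lt_mul_left hM0.ne' hMt.ne hβe1
      have hab : ENNReal.ofReal α * a = b := by
        have hαβ : α = β * β := (Real.mul_self_sqrt hα0.le).symm
        rw [hadef, hbdef, hαβ, ENNReal.ofReal_mul hβ0.le, mul_assoc,
          ENNReal.mul_div_cancel hβene hβet]
      have hnb : g ⁻¹' Ioo a b ∈ 𝓝 (p.1, s₀) :=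
        (hgcont _ hMt) (Ioo_mem_nhds ha hb)
      rcases Metric.mem_nhds_iff.mp hnb with ⟨r₀, hr₀, hball⟩
      refine ⟨min r₀ (σ / (2 * α)), lt_min hr₀ (by positivity), ?_⟩
      intro p' hp' hd q hq hdq
      have hrσ : σ / (2 * α) ≤ σ / 2 := by
        apply div_le_div_of_nonneg_left hσ.le (by norm_num) (by linarith)
      -- bound on g q
      have hq2 : q.2 ≤ s₀ := by
        have h1 : |q.2 - p.2| < σ / 2 := by
          calc |q.2 - p.2| = dist q.2 p.2 := (Real.dist_eq _ _).symm
            _ ≤ dist q p := by rw [Prod.dist_eq]; exact le_max_right _ _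
            _ < min r₀ (σ / (2 * α)) := hdq
            _ ≤ σ / 2 := (min_le_right _ _).trans hrσ
        have := abs_lt.mp h1
        simp only [hs₀def]; linarith [this.2]
      have hq1 : dist (q.1, s₀) (p.1, s₀) < r₀ := by
        rw [Prod.dist_eq]
        simp only [dist_self]
        calc max (dist q.1 p.1) 0 = dist q.1 p.1 := max_eq_left dist_nonneg
          _ ≤ dist q p := by rw [Prod.dist_eq]; exact le_max_left _ _
          _ < _ := hdq.trans_le (min_le_left _ _)
      have hqb : g q < b := by
        calc g q = g (q.1, q.2) := by rw [Prod.mk.eta]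
          _ ≤ g (q.1, s₀) := hmono q.1 hq2
          _ < b := (hball hq1).2
      -- bound on g (p'.1, α p'.2 + σ)
      have hp'2 : s₀ ≤ α * p'.2 + σ := by
        have h1 : |p'.2 - p.2| < σ / (2 * α) := by
          calc |p'.2 - p.2| = dist p'.2 p.2 := (Real.dist_eq _ _).symm
            _ ≤ dist p' p := by rw [Prod.dist_eq]; exact le_max_right _ _
            _ < min r₀ (σ / (2 * α)) := hd
            _ ≤ σ / (2 * α) := min_le_right _ _
        have h2 := abs_lt.mp h1
        have h3 : p.2 - σ / (2 * α) < p'.2 := by linarith [h2.1]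
        have : α * (p.2 - σ / (2 * α)) ≤ α * p'.2 := by nlinarith
        have h4 : α * (p.2 - σ / (2 * α)) = α * p.2 - σ / 2 := by
          field_simp
        simp only [hs₀def]; nlinarith
      have hp'1 : dist (p'.1, s₀) (p.1, s₀) < r₀ := by
        rw [Prod.dist_eq]
        simp only [dist_self]
        calc max (dist p'.1 p.1) 0 = dist p'.1 p.1 := max_eq_left dist_nonneg
          _ ≤ dist p' p := by rw [Prod.dist_eq]; exact le_max_left _ _
          _ < _ := hd.trans_le (min_le_left _ _)
      have hpa : a < g (p'.1, α * p'.2 + σ) := by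
        calc a < g (p'.1, s₀) := (hball hp'1).1
          _ ≤ g (p'.1, α * p'.2 + σ) := hmono p'.1 hp'2
      calc g q ≤ b := hqb.le
        _ = ENNReal.ofReal α * a := hab.symm
        _ ≤ ENNReal.ofReal α * g (p'.1, α * p'.2 + σ) := mul_le_mul_right hpa.le _
  -- Lebesgue number lemma
  choose ρ hρ0 hρ using key
  have hcover : E ⊆ ⋃ i : E, Metric.ball (i : EuclideanSpace ℝ (Fin n) × ℝ) (ρ i i.2) := by
    intro p hp
    exact mem_iUnion.mpr ⟨⟨p, hp⟩, Metric.mem_ball_self (hρ0 p hp)⟩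
  obtain ⟨δ, hδ0, hδ⟩ := lebesgue_number_lemma_of_metric hE
    (fun i : E => Metric.isOpen_ball) hcover
  refine ⟨δ / 2, by positivity, ?_⟩
  intro p hp q hq hpq
  obtain ⟨i, hi⟩ := hδ p hp
  have hpmem : p ∈ Metric.ball (i : EuclideanSpace ℝ (Fin n) × ℝ) (ρ i i.2) :=
    hi (Metric.mem_ball_self hδ0)
  have hqmem : q ∈ Metric.ball (i : EuclideanSpace ℝ (Fin n) × ℝ) (ρ i i.2) := by
    apply hi
    rw [Metric.mem_ball, dist_comm]
    calc dist p q ≤ δ / 2 := hpq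
      _ < δ := by linarith
  exact hρ i i.2 p hp hpmem q hq hqmem
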